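/- For all natural numbers k < d, the truncated binomial P_{k;d}(x) = ∑_{i=0}^{k} (d choose i)·x^i has no multiple roots; that is, P_{k;d} and its derivative P′_{k;d} have no common root in ℂ (equivalently, P_{k;d} is squarefree in ℂ[x]). -/

import Mathlib

open Polynomial

/-- The truncated binomial `P_{k;d}(x) = ∑_{i=0}^{k} (d choose i) x^i` as a complex
polynomial. -/
noncomputable def truncBinom (d k : ℕ) : Polynomial ℂ :=
  ∑ i ∈ Finset.range (k + 1), Polynomial.C (Nat.choose d i : ℂ) * Polynomial.X ^ i

lemma truncBinom_succ (d k : ℕ) :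
    truncBinom d (k + 1) = truncBinom d k + Polynomial.C (Nat.choose d (k+1) : ℂ) * Polynomial.X ^ (k+1) := by
  simp [truncBinom, Finset.sum_range_succ]

lemma nat_key (d k : ℕ) : (k + 1) * Nat.choose d (k+1) = d * Nat.choose (d-1) k := by
  cases d with
  | zero => simp
  | succ n =>
    simpa [Nat.mul_comm] using (Nat.add_one_mul_choose_eq n k).symm

lemma choose_key (d k : ℕ) (hd : d ≠ 0) :
    (Nat.choose d (k+1) : ℂ) = (Nat.choose (d-1) (k+1) : ℂ) + (Nat.choose (d-1) k : ℂ) := by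
  obtain ⟨n, rfl⟩ := Nat.exists_eq_succ_of_ne_zero hd
  rw [Nat.choose_succ_succ]
  push_cast
  simp [add_comm]

lemma truncBinom_key (d k : ℕ) (hd0 : d ≠ 0) (z : ℂ) :
    (z + 1) * ((truncBinom d k).derivative).eval z
      = d * (truncBinom d k).eval z - d * (Nat.choose (d-1) k : ℂ) * z ^ k := by
  induction k with
  | zero => simp [truncBinom]
  | succ k ih =>
    have hnat : ((k : ℂ) + 1) * (Nat.choose d (k+1) : ℂ) = d * (Nat.choose (d-1) k : ℂ) := by
      exact_mod_cast nat_key d k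
    have hcc := choose_key d k hd0
    rw [truncBinom_succ]
    simp only [derivative_add, derivative_C_mul, derivative_X_pow, eval_add, eval_mul, eval_C,
      eval_pow, eval_X, eval_natCast]
    push_cast
    linear_combination ih + (z ^ k * (z + 1)) * hnat - ((d : ℂ) * z ^ (k+1)) * hcc

/-- For `k < d`, the truncated binomial `P_{k;d}` has no multiple roots: it has no common
root with its derivative in `ℂ`, equivalently it is squarefree. -/
theorem truncBinom_no_multiple_roots (k d : ℕ) (hkd : k < d) :
    (∀ z : ℂ, (truncBinom d k).eval z = 0 →
      ((truncBinom d k).derivative).eval z ≠ 0) ∧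
    Squarefree (truncBinom d k) := by
  have hmain : ∀ z : ℂ, (truncBinom d k).eval z = 0 →
      ((truncBinom d k).derivative).eval z ≠ 0 := by
    intro z hz hz'
    have key := truncBinom_key d k (by omega) z
    rw [hz, hz'] at key
    have hc : (Nat.choose (d-1) k : ℂ) ≠ 0 := by
      have : 0 < Nat.choose (d-1) k := Nat.choose_pos (by omega)
      exact_mod_cast this.ne'
    have hd : (d : ℂ) ≠ 0 := Nat.cast_ne_zero.mpr (by omega)
    have hzk : z ^ k = 0 := by
      have hne := mul_ne_zero hd hc
      have key' : (d : ℂ) * (Nat.choose (d-1) k : ℂ) * z ^ k = 0 := by linear_combination key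
      exact (mul_eq_zero.mp key').resolve_left hne
    have hz0 : z = 0 := by
      by_contra h
      exact (pow_ne_zero k h) hzk
    rw [hz0] at hz
    simp [truncBinom, eval_finset_sum, Finset.sum_range_succ', pow_succ] at hz
  refine ⟨hmain, ?_⟩
  have hsep : (truncBinom d k).Separable := by
    rw [Polynomial.Separable]
    rw [Polynomial.isCoprime_iff_aeval_ne_zero_of_isAlgClosed (k := ℂ) ℂ]
    intro a
    by_cases h : (truncBinom d k).eval a = 0
    · right; simpa using hmain a h
    · left; simpa using h
  exact hsep.squarefree
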